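/- For any t > 0, γ > 0, σ > 0, C₀ ∈ ℝ with σ > 2C₀, and σ₃ ≥ 0, the integral ∫₀^∞ e^{−γ t/(2s)} e^{(2C₀−σ)s} (1 + √(σ₃ s)) s^{−1/2} |s^{−1/2} − 1_{s ≥ t}(s−t)^{−1/2}| ds equals, after the substitution s = t u, the t-independent quantity ∫₀^∞ e^{−γ/(2u)} e^{(2C₀−σ)t u}(1+√(σ₃ t u)) |1/u − 1_{u≥1}/√(u(u−1))| du, and this is bounded above uniformly in t by a finite constant C(γ, σ−2C₀, σ₃) · (∫₀¹ e^{−γ/(2u)}/u du + ∫₁^∞ (1/√(u(u−1)) − 1/u) du). -/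

import Mathlib

open MeasureTheory Real Set

lemma aux_sqrt_exp {c x : ℝ} (hc : 0 < c) (hx : 0 ≤ x) :
    Real.sqrt x * Real.exp (-(c * x)) ≤ (Real.sqrt c)⁻¹ := by
  have hsc : 0 < Real.sqrt c := Real.sqrt_pos.mpr hc
  rcases le_or_gt (c * x) 1 with h | h
  · have h1 : Real.sqrt x ≤ (Real.sqrt c)⁻¹ := by
      rw [← Real.sqrt_inv]
      exact Real.sqrt_le_sqrt (by rw [← mul_le_mul_iff_right₀ hc, mul_inv_cancel₀ hc.ne']; exact h)
    calc Real.sqrt x * Real.exp (-(c*x)) ≤ Real.sqrt x * 1 := by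
          gcongr
          exact Real.exp_le_one_iff.mpr (neg_nonpos.mpr (mul_nonneg hc.le hx))
      _ = Real.sqrt x := mul_one _
      _ ≤ (Real.sqrt c)⁻¹ := h1
  · have hxpos : 0 < x := by nlinarith
    have hsx : 0 < Real.sqrt x := Real.sqrt_pos.mpr hxpos
    have he : Real.exp (-(c*x)) ≤ (c*x)⁻¹ := by
      rw [Real.exp_neg]
      exact inv_anti₀ (by linarith) (by linarith [Real.add_one_le_exp (c*x)])
    have hab : 1 ≤ Real.sqrt x * Real.sqrt c := by
      rw [← Real.sqrt_mul hx, show (1:ℝ) = Real.sqrt 1 by simp]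
      exact Real.sqrt_le_sqrt (by nlinarith)
    calc Real.sqrt x * Real.exp (-(c*x)) ≤ Real.sqrt x * (c*x)⁻¹ := by gcongr
      _ = (c * Real.sqrt x)⁻¹ := by
          field_simp
          exact Real.sq_sqrt hx
      _ ≤ (Real.sqrt c)⁻¹ := by
          apply inv_anti₀ hsc
          nlinarith [Real.sq_sqrt hc.le]

lemma aux_env {σ C₀ σ₃ : ℝ} (hσC₀ : 2 * C₀ < σ) (hσ₃ : 0 ≤ σ₃) {x : ℝ} (hx : 0 ≤ x) :
    Real.exp ((2 * C₀ - σ) * x) * (1 + Real.sqrt (σ₃ * x)) ≤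
      1 + Real.sqrt σ₃ * (Real.sqrt (σ - 2 * C₀))⁻¹ := by
  have hc : 0 < σ - 2 * C₀ := by linarith
  rw [show (2*C₀ - σ) * x = -((σ - 2*C₀) * x) by ring, Real.sqrt_mul hσ₃, mul_add, mul_one]
  have h1 : Real.exp (-((σ - 2*C₀)*x)) ≤ 1 :=
    Real.exp_le_one_iff.mpr (neg_nonpos.mpr (mul_nonneg hc.le hx))
  have h2 : Real.exp (-((σ - 2*C₀)*x)) * (Real.sqrt σ₃ * Real.sqrt x)
      ≤ Real.sqrt σ₃ * (Real.sqrt (σ - 2*C₀))⁻¹ := by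
    rw [show Real.exp (-((σ - 2*C₀)*x)) * (Real.sqrt σ₃ * Real.sqrt x)
        = Real.sqrt σ₃ * (Real.sqrt x * Real.exp (-((σ - 2*C₀)*x))) by ring]
    exact mul_le_mul_of_nonneg_left (aux_sqrt_exp hc hx) (Real.sqrt_nonneg σ₃)
  linarith

lemma aux_pointwise (γ σ C₀ σ₃ t u : ℝ) (ht : 0 < t) (hu : 0 < u) :
    Real.exp (-γ * t / (2 * (t * u))) * Real.exp ((2 * C₀ - σ) * (t * u)) *
        (1 + Real.sqrt (σ₃ * (t * u))) * (1 / Real.sqrt (t * u)) *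
        |1 / Real.sqrt (t * u) - (if t ≤ t * u then 1 / Real.sqrt (t * u - t) else 0)| =
      t⁻¹ * (Real.exp (-γ / (2 * u)) * Real.exp ((2 * C₀ - σ) * (t * u)) *
        (1 + Real.sqrt (σ₃ * (t * u))) *
        |1 / u - (if 1 ≤ u then 1 / Real.sqrt (u * (u - 1)) else 0)|) := by
  have hst : 0 < Real.sqrt t := Real.sqrt_pos.mpr ht
  have hsu : 0 < Real.sqrt u := Real.sqrt_pos.mpr hu
  have e1 : -γ * t / (2 * (t * u)) = -γ / (2 * u) := by
    rw [show 2 * (t * u) = t * (2 * u) by ring, show -γ * t = t * -γ by ring,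
      mul_div_mul_left _ _ ht.ne']
  have s1 : Real.sqrt (t * u) = Real.sqrt t * Real.sqrt u := Real.sqrt_mul ht.le u
  have A : 1 / (Real.sqrt t * Real.sqrt u) * (1 / (Real.sqrt t * Real.sqrt u))
      = t⁻¹ * (1 / u) := by
    rw [div_mul_div_comm, one_mul, mul_mul_mul_comm, Real.mul_self_sqrt ht.le,
      Real.mul_self_sqrt hu.le, one_div, mul_inv, one_div]
  by_cases h1u : 1 ≤ u
  · rw [if_pos (le_mul_of_one_le_right ht.le h1u), if_pos h1u, e1]
    have s2 : Real.sqrt (t * u - t) = Real.sqrt t * Real.sqrt (u - 1) := by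
      rw [show t * u - t = t * (u - 1) by ring, Real.sqrt_mul ht.le]
    have s3 : Real.sqrt (u * (u - 1)) = Real.sqrt u * Real.sqrt (u - 1) :=
      Real.sqrt_mul hu.le _
    have B : 1 / (Real.sqrt t * Real.sqrt u) * (1 / (Real.sqrt t * Real.sqrt (u - 1)))
        = t⁻¹ * (1 / (Real.sqrt u * Real.sqrt (u - 1))) := by
      rw [div_mul_div_comm, one_mul, mul_mul_mul_comm, Real.mul_self_sqrt ht.le,
        one_div, mul_inv, one_div]
    have inner : (1 / Real.sqrt (t * u)) * (1 / Real.sqrt (t * u) - 1 / Real.sqrt (t * u - t))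
        = t⁻¹ * (1 / u - 1 / Real.sqrt (u * (u - 1))) := by
      rw [s1, s2, s3, mul_sub, A, B]; ring
    have habs : (1 / Real.sqrt (t * u)) *
        |1 / Real.sqrt (t * u) - 1 / Real.sqrt (t * u - t)| =
        t⁻¹ * |1 / u - 1 / Real.sqrt (u * (u - 1))| := by
      have h0 : (0:ℝ) ≤ 1 / Real.sqrt (t * u) := by positivity
      rw [show (1 / Real.sqrt (t * u)) *
            |1 / Real.sqrt (t * u) - 1 / Real.sqrt (t * u - t)| =
          |1 / Real.sqrt (t * u)| *
            |1 / Real.sqrt (t * u) - 1 / Real.sqrt (t * u - t)| by rw [abs_of_nonneg h0],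
        ← abs_mul, inner, abs_mul, abs_of_nonneg (inv_nonneg.mpr ht.le)]
    rw [mul_assoc, habs]; ring
  · rw [if_neg (fun h => h1u (by nlinarith : 1 ≤ u)), if_neg h1u, e1, sub_zero, sub_zero,
      abs_of_nonneg (show (0:ℝ) ≤ 1 / Real.sqrt (t * u) by positivity),
      abs_of_nonneg (show (0:ℝ) ≤ 1 / u by positivity), s1]
    rw [show Real.exp (-γ / (2*u)) * Real.exp ((2*C₀ - σ)*(t*u)) * (1 + Real.sqrt (σ₃*(t*u))) *
        (1 / (Real.sqrt t * Real.sqrt u)) * (1 / (Real.sqrt t * Real.sqrt u))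
      = Real.exp (-γ / (2*u)) * Real.exp ((2*C₀ - σ)*(t*u)) * (1 + Real.sqrt (σ₃*(t*u))) *
        (1 / (Real.sqrt t * Real.sqrt u) * (1 / (Real.sqrt t * Real.sqrt u))) by ring, A]
    ring

lemma aux_F1_int {γ : ℝ} (hγ : 0 < γ) :
    IntegrableOn (fun u : ℝ => Real.exp (-γ / (2 * u)) / u) (Ioc 0 1) := by
  apply Measure.integrableOn_of_bounded (M := 2/γ) (by simp)
  · exact (Measurable.div (Real.measurable_exp.comp ((measurable_const.div ((measurable_const.mul measurable_id)))) ) measurable_id).aestronglyMeasurable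
  · rw [ae_restrict_iff' measurableSet_Ioc]
    filter_upwards with u hu
    have hu0 : 0 < u := hu.1
    have key : Real.exp (-γ / (2*u)) ≤ 2*u/γ := by
      rw [show -γ/(2*u) = -(γ/(2*u)) by ring, Real.exp_neg]
      have h1 : γ/(2*u) ≤ Real.exp (γ/(2*u)) := by
        linarith [Real.add_one_le_exp (γ/(2*u))]
      have h2 : 0 < γ/(2*u) := by positivity
      calc (Real.exp (γ/(2*u)))⁻¹ ≤ (γ/(2*u))⁻¹ := inv_anti₀ h2 h1
        _ = 2*u/γ := by field_simp
    rw [Real.norm_eq_abs, abs_of_nonneg (by positivity)]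
    rw [div_le_iff₀ hu0] at *
    calc Real.exp (-γ/(2*u)) ≤ 2*u/γ := key
      _ = 2/γ*u := by ring

lemma aux_F2_meas : Measurable (fun u : ℝ => 1 / Real.sqrt (u * (u-1)) - 1 / u) := by
  apply Measurable.sub
  · exact measurable_const.div
      (Real.continuous_sqrt.measurable.comp (measurable_id.mul (measurable_id.sub measurable_const)))
  · exact measurable_const.div measurable_id

lemma aux_F2_nonneg {u : ℝ} (hu : 1 < u) : 0 ≤ 1 / Real.sqrt (u * (u-1)) - 1 / u := by
  have h1 : Real.sqrt (u * (u-1)) ≤ u :=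
    calc Real.sqrt (u*(u-1)) ≤ Real.sqrt (u^2) := Real.sqrt_le_sqrt (by nlinarith)
      _ = u := Real.sqrt_sq (by linarith)
  have h2 : 0 < Real.sqrt (u*(u-1)) := Real.sqrt_pos.mpr (by nlinarith)
  have := one_div_le_one_div_of_le h2 h1
  linarith

lemma aux_F2_int : IntegrableOn (fun u : ℝ => 1 / Real.sqrt (u * (u-1)) - 1 / u) (Ioi 1) := by
  rw [← Ioc_union_Ioi_eq_Ioi (by norm_num : (1:ℝ) ≤ 2)]
  apply IntegrableOn.union
  · -- on Ioc 1 2, dominated by (u-1)^(-1/2)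
    have hg : IntegrableOn (fun u : ℝ => (u-1) ^ (-(1/2) : ℝ)) (Ioc 1 2) := by
      rw [← intervalIntegrable_iff_integrableOn_Ioc_of_le (by norm_num : (1:ℝ) ≤ 2)]
      have := (intervalIntegral.intervalIntegrable_rpow' (a := 0) (b := 1)
        (r := -(1/2)) (by norm_num)).comp_sub_right 1
      simpa [show (0:ℝ)+1 = 1 by norm_num, show (1:ℝ)+1 = 2 by norm_num] using this
    apply Integrable.mono' hg aux_F2_meas.aestronglyMeasurable.restrict
    rw [ae_restrict_iff' measurableSet_Ioc]
    filter_upwards with u hu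
    have hu1 : 1 < u := hu.1
    rw [Real.norm_eq_abs, abs_of_nonneg (aux_F2_nonneg hu1)]
    have h1 : Real.sqrt (u-1) ≤ Real.sqrt (u*(u-1)) := by
      apply Real.sqrt_le_sqrt; nlinarith
    have h2 : 0 < Real.sqrt (u-1) := Real.sqrt_pos.mpr (by linarith)
    have h3 : (u-1) ^ (-(1/2) : ℝ) = 1 / Real.sqrt (u-1) := by
      rw [Real.rpow_neg (by linarith : (0:ℝ) ≤ u-1), Real.sqrt_eq_rpow]
      exact (one_div _).symm
    rw [h3]
    have := one_div_le_one_div_of_le h2 h1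
    have h4 : 0 < 1/u := by positivity
    linarith
  · -- on Ioi 2, dominated by sqrt 2 * u^(-2)
    have hg : IntegrableOn (fun u : ℝ => Real.sqrt 2 * u ^ (-2 : ℝ)) (Ioi 2) :=
      (integrableOn_Ioi_rpow_of_lt (by norm_num) (by norm_num)).const_mul _
    apply Integrable.mono' hg aux_F2_meas.aestronglyMeasurable.restrict
    rw [ae_restrict_iff' measurableSet_Ioi]
    filter_upwards with u hu
    have hu2 : 2 < u := hu
    have hu0 : 0 < u := by linarith
    rw [Real.norm_eq_abs, abs_of_nonneg (aux_F2_nonneg (by linarith))]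
    set s := Real.sqrt (u*(u-1)) with hs
    have hs2 : s^2 = u*(u-1) := Real.sq_sqrt (by nlinarith)
    have hsl : u - 1 ≤ s := by
      rw [hs]
      calc u - 1 = Real.sqrt ((u-1)^2) := (Real.sqrt_sq (by linarith)).symm
        _ ≤ Real.sqrt (u*(u-1)) := Real.sqrt_le_sqrt (by nlinarith)
    have hsu : s ≤ u := by
      rw [hs]
      calc Real.sqrt (u*(u-1)) ≤ Real.sqrt (u^2) := Real.sqrt_le_sqrt (by nlinarith)
        _ = u := Real.sqrt_sq hu0.le
    have hspos : 0 < s := by linarith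
    have hr : u ^ (-2 : ℝ) = 1 / (u*u) := by
      rw [show (-2:ℝ) = -(2:ℕ) by norm_num, Real.rpow_neg hu0.le, Real.rpow_natCast, one_div, sq]
    rw [hr]
    have step1 : 1/s - 1/u = (u - s)/(s*u) := by field_simp
    have step2 : (u - s)/(s*u) ≤ 1/(s*u) := by gcongr; linarith
    have hpos2 : 0 < u + Real.sqrt 2 * s := by positivity
    have husq : u ≤ Real.sqrt 2 * s := by
      nlinarith [hs2, Real.sq_sqrt (show (0:ℝ) ≤ 2 by norm_num), Real.sqrt_nonneg 2, hpos2, hu2]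
    have step3 : 1/(s*u) ≤ Real.sqrt 2 / (u*u) := by
      rw [div_le_div_iff₀ (by positivity) (by positivity)]
      nlinarith [husq, hu0]
    have e : Real.sqrt 2 * (1/(u*u)) = Real.sqrt 2/(u*u) := by ring
    linarith [step1, step2, step3, e]


lemma aux_exp_div {γ u : ℝ} (hγ : 0 < γ) (hu : 0 < u) :
    Real.exp (-γ / (2 * u)) / u ≤ 2 / γ := by
  have key : Real.exp (-γ / (2*u)) ≤ 2*u/γ := by
    rw [show -γ/(2*u) = -(γ/(2*u)) by ring, Real.exp_neg]
    have h1 : γ/(2*u) ≤ Real.exp (γ/(2*u)) := by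
      linarith [Real.add_one_le_exp (γ/(2*u))]
    have h2 : 0 < γ/(2*u) := by positivity
    calc (Real.exp (γ/(2*u)))⁻¹ ≤ (γ/(2*u))⁻¹ := inv_anti₀ h2 h1
      _ = 2*u/γ := by field_simp
  calc Real.exp (-γ/(2*u))/u ≤ (2*u/γ)/u := by gcongr
    _ = 2/γ := by field_simp

theorem stmt_5 (γ σ C₀ σ₃ : ℝ) (hγ : 0 < γ) (hσ : 0 < σ) (hσC₀ : 2 * C₀ < σ)
    (hσ₃ : 0 ≤ σ₃) :
    ∃ C : ℝ, 0 < C ∧ ∀ t : ℝ, 0 < t →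
      (∫ s in Ioi (0 : ℝ),
          Real.exp (-γ * t / (2 * s)) * Real.exp ((2 * C₀ - σ) * s) *
            (1 + Real.sqrt (σ₃ * s)) * (1 / Real.sqrt s) *
            |1 / Real.sqrt s - (if t ≤ s then 1 / Real.sqrt (s - t) else 0)|) =
        (∫ u in Ioi (0 : ℝ),
          Real.exp (-γ / (2 * u)) * Real.exp ((2 * C₀ - σ) * (t * u)) *
            (1 + Real.sqrt (σ₃ * (t * u))) *
            |1 / u - (if 1 ≤ u then 1 / Real.sqrt (u * (u - 1)) else 0)|) ∧
      (∫ s in Ioi (0 : ℝ),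
          Real.exp (-γ * t / (2 * s)) * Real.exp ((2 * C₀ - σ) * s) *
            (1 + Real.sqrt (σ₃ * s)) * (1 / Real.sqrt s) *
            |1 / Real.sqrt s - (if t ≤ s then 1 / Real.sqrt (s - t) else 0)|) ≤
        C * ((∫ u in Ioc (0 : ℝ) 1, Real.exp (-γ / (2 * u)) / u) +
             (∫ u in Ioi (1 : ℝ), (1 / Real.sqrt (u * (u - 1)) - 1 / u))) := by
  set K : ℝ := 1 + Real.sqrt σ₃ * (Real.sqrt (σ - 2 * C₀))⁻¹ with hK
  have hKpos : 0 < K := by positivity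
  refine ⟨K, hKpos, fun t ht => ?_⟩
  set g : ℝ → ℝ := fun s =>
    Real.exp (-γ * t / (2 * s)) * Real.exp ((2 * C₀ - σ) * s) *
      (1 + Real.sqrt (σ₃ * s)) * (1 / Real.sqrt s) *
      |1 / Real.sqrt s - (if t ≤ s then 1 / Real.sqrt (s - t) else 0)| with hg
  set h : ℝ → ℝ := fun u =>
    Real.exp (-γ / (2 * u)) * Real.exp ((2 * C₀ - σ) * (t * u)) *
      (1 + Real.sqrt (σ₃ * (t * u))) *
      |1 / u - (if 1 ≤ u then 1 / Real.sqrt (u * (u - 1)) else 0)| with hh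
  have part1 : (∫ s in Ioi (0:ℝ), g s) = ∫ u in Ioi (0:ℝ), h u := by
    have hcv := integral_comp_mul_left_Ioi g 0 ht
    rw [mul_zero] at hcv
    have hcong : (∫ x in Ioi (0:ℝ), g (t * x)) = t⁻¹ * ∫ u in Ioi (0:ℝ), h u := by
      rw [← integral_const_mul]
      exact setIntegral_congr_fun measurableSet_Ioi
        (fun u hu => aux_pointwise γ σ C₀ σ₃ t u ht hu)
    have heq := hcv.symm.trans hcong
    rw [smul_eq_mul] at heq
    exact mul_left_cancel₀ (inv_ne_zero ht.ne') heq
  refine ⟨part1, ?_⟩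
  rw [part1]
  -- measurability of h
  have hmeas : Measurable h := by
    apply Measurable.mul
    apply Measurable.mul
    apply Measurable.mul
    · exact Real.measurable_exp.comp (measurable_const.div (measurable_const.mul measurable_id))
    · exact Real.measurable_exp.comp (measurable_const.mul (measurable_const.mul measurable_id))
    · exact measurable_const.add (Real.continuous_sqrt.measurable.comp
        (measurable_const.mul (measurable_const.mul measurable_id)))
    · apply Measurable.abs
      apply Measurable.sub
      · exact measurable_const.div measurable_id
      · exact Measurable.ite (measurableSet_le measurable_const measurable_id)
          (measurable_const.div (Real.continuous_sqrt.measurable.comp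
            (measurable_id.mul (measurable_id.sub measurable_const)))) measurable_const
  -- nonnegativity of h
  have hnn : ∀ u : ℝ, 0 ≤ h u := by
    intro u
    rw [hh]
    positivity
  -- envelope
  have henv : ∀ u : ℝ, 0 < u →
      Real.exp ((2*C₀ - σ) * (t*u)) * (1 + Real.sqrt (σ₃ * (t*u))) ≤ K := by
    intro u hu
    exact aux_env hσC₀ hσ₃ (by positivity : (0:ℝ) ≤ t*u)
  -- pointwise bound on Ioc 0 1
  have hb1 : ∀ u ∈ Ioc (0:ℝ) 1, h u ≤ K * (Real.exp (-γ / (2 * u)) / u) := by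
    intro u hu
    have hu0 : 0 < u := hu.1
    have hD : |1/u - (if 1 ≤ u then 1 / Real.sqrt (u * (u-1)) else 0)| = 1/u := by
      rcases eq_or_lt_of_le hu.2 with he | hl
      · rw [he]; norm_num
      · rw [if_neg (not_le.mpr hl), sub_zero, abs_of_nonneg (by positivity)]
    rw [hh]
    simp only []
    rw [hD]
    calc Real.exp (-γ/(2*u)) * Real.exp ((2*C₀ - σ)*(t*u)) * (1 + Real.sqrt (σ₃*(t*u))) * (1/u)
        = (Real.exp ((2*C₀ - σ)*(t*u)) * (1 + Real.sqrt (σ₃*(t*u)))) *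
          (Real.exp (-γ/(2*u)) * (1/u)) := by ring
      _ ≤ K * (Real.exp (-γ/(2*u)) * (1/u)) :=
          mul_le_mul_of_nonneg_right (henv u hu0) (by positivity)
      _ = K * (Real.exp (-γ/(2*u)) / u) := by ring
  -- pointwise bound on Ioi 1
  have hb2 : ∀ u ∈ Ioi (1:ℝ), h u ≤ K * (1 / Real.sqrt (u * (u-1)) - 1/u) := by
    intro u hu
    have hu1 : 1 < u := hu
    have hu0 : 0 < u := by linarith
    have hD : |1/u - (if 1 ≤ u then 1 / Real.sqrt (u * (u-1)) else 0)|
        = 1 / Real.sqrt (u * (u-1)) - 1/u := by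
      rw [if_pos hu1.le, abs_sub_comm, abs_of_nonneg (aux_F2_nonneg hu1)]
    have he1 : Real.exp (-γ/(2*u)) ≤ 1 :=
      Real.exp_le_one_iff.mpr (by rw [neg_div]; simp; positivity)
    have hF2 : 0 ≤ 1 / Real.sqrt (u * (u-1)) - 1/u := aux_F2_nonneg hu1
    rw [hh]
    simp only []
    rw [hD]
    calc Real.exp (-γ/(2*u)) * Real.exp ((2*C₀ - σ)*(t*u)) * (1 + Real.sqrt (σ₃*(t*u))) *
          (1 / Real.sqrt (u * (u-1)) - 1/u)
        = (Real.exp (-γ/(2*u)) * (Real.exp ((2*C₀ - σ)*(t*u)) * (1 + Real.sqrt (σ₃*(t*u))))) *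
          (1 / Real.sqrt (u * (u-1)) - 1/u) := by ring
      _ ≤ (1 * K) * (1 / Real.sqrt (u * (u-1)) - 1/u) :=
          mul_le_mul_of_nonneg_right
            (mul_le_mul he1 (henv u hu0) (by positivity) zero_le_one) hF2
      _ = K * (1 / Real.sqrt (u * (u-1)) - 1/u) := by ring
  -- integrability
  have hInt1 : IntegrableOn h (Ioc 0 1) := by
    apply Measure.integrableOn_of_bounded (M := K * (2/γ)) (by simp)
      hmeas.aestronglyMeasurable
    rw [ae_restrict_iff' measurableSet_Ioc]
    filter_upwards with u hu
    rw [Real.norm_eq_abs, abs_of_nonneg (hnn u)]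
    calc h u ≤ K * (Real.exp (-γ / (2 * u)) / u) := hb1 u hu
      _ ≤ K * (2/γ) := mul_le_mul_of_nonneg_left (aux_exp_div hγ hu.1) hKpos.le
  have hInt2 : IntegrableOn h (Ioi 1) := by
    apply Integrable.mono' (aux_F2_int.const_mul K) hmeas.aestronglyMeasurable.restrict
    rw [ae_restrict_iff' measurableSet_Ioi]
    filter_upwards with u hu
    rw [Real.norm_eq_abs, abs_of_nonneg (hnn u)]
    exact hb2 u hu
  have hIntF1 : IntegrableOn (fun u : ℝ => K * (Real.exp (-γ / (2 * u)) / u)) (Ioc 0 1) :=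
    (aux_F1_int hγ).const_mul K
  have hIntF2 : IntegrableOn (fun u : ℝ => K * (1 / Real.sqrt (u * (u-1)) - 1/u)) (Ioi 1) :=
    aux_F2_int.const_mul K
  have hsplit : (∫ u in Ioi (0:ℝ), h u) = (∫ u in Ioc (0:ℝ) 1, h u) + ∫ u in Ioi (1:ℝ), h u := by
    rw [← Ioc_union_Ioi_eq_Ioi (zero_le_one (α := ℝ)),
      setIntegral_union (Ioc_disjoint_Ioi le_rfl) measurableSet_Ioi hInt1 hInt2]
  have hle1 : (∫ u in Ioc (0:ℝ) 1, h u) ≤ ∫ u in Ioc (0:ℝ) 1, K * (Real.exp (-γ / (2 * u)) / u) :=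
    setIntegral_mono_on hInt1 hIntF1 measurableSet_Ioc hb1
  have hle2 : (∫ u in Ioi (1:ℝ), h u) ≤ ∫ u in Ioi (1:ℝ), K * (1 / Real.sqrt (u * (u-1)) - 1/u) :=
    setIntegral_mono_on hInt2 hIntF2 measurableSet_Ioi hb2
  rw [integral_const_mul] at hle1 hle2
  rw [hsplit, mul_add]
  exact add_le_add hle1 hle2
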